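/- For fixed τ ∈ S_k and n ≥ k, the number of involutions in S_n containing τ as a subsequence equals the sum over j ∈ J(τ) of C(n-k, k-j) · t_{n-2k+j}, where J(τ) consists of 0 together with all j ∈ {1,…,k} such that the pattern of τ_1…τ_j is an involution in S_j. -/

import Mathlib

open Equiv Finset

/-- The number of involutions in the symmetric group S_n. -/
def numInvolutions (n : ℕ) : ℕ :=
  (Finset.univ.filter fun π : Equiv.Perm (Fin n) => π * π = 1).card

/-- `π ∈ S_n` contains `τ ∈ S_k` as a subsequence. -/
def ContainsSubseq {n k : ℕ} (π : Equiv.Perm (Fin n)) (τ : Equiv.Perm (Fin k)) : Prop :=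
  ∃ ι : Fin k → Fin n, StrictMono ι ∧ ∀ m : Fin k, (π (ι m) : ℕ) = (τ m : ℕ)

/-- `p` is the pattern (order-preserving relabeling) of the word `w`. -/
def IsPattern {j : ℕ} {α : Type*} [LinearOrder α] (w : Fin j → α) (p : Equiv.Perm (Fin j)) : Prop :=
  ∀ a b : Fin j, p a ≤ p b ↔ w a ≤ w b

/-- The pattern of `τ_1 … τ_j` is an involution in S_j. -/
def InitPatternIsInvolution {k : ℕ} (τ : Equiv.Perm (Fin k)) (j : ℕ) : Prop :=
  ∃ hjk : j ≤ k, ∃ p : Equiv.Perm (Fin j),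
    IsPattern (fun m : Fin j => τ (Fin.castLE hjk m)) p ∧ p * p = 1

/-- The j-set of `τ`. -/
def JSet {k : ℕ} (τ : Equiv.Perm (Fin k)) : Set ℕ :=
  {0} ∪ {j | 1 ≤ j ∧ InitPatternIsInvolution τ j}

open scoped Classical in
/-- The j-set of `τ`, as a finset. -/
noncomputable def JFinset {k : ℕ} (τ : Equiv.Perm (Fin k)) : Finset ℕ :=
  (Finset.range (k + 1)).filter fun j => j ∈ JSet τ

/-- Concatenation of decreasing blocks of consecutive integers starting above `s`. -/
def layersFrom : ℕ → List ℕ → List ℕ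
  | _, [] => []
  | s, a :: rest => ((List.range a).reverse.map fun t => s + t + 1) ++ layersFrom (s + a) rest

/-- `τ` is a layered permutation. -/
def IsLayered {k : ℕ} (τ : Equiv.Perm (Fin k)) : Prop :=
  ∃ comp : List ℕ, (∀ a ∈ comp, 0 < a) ∧ comp.sum = k ∧
    List.ofFn (fun m : Fin k => (τ m : ℕ) + 1) = layersFrom 0 comp

section Fwd
variable {k n : ℕ} (τ : Equiv.Perm (Fin k)) (hn : k ≤ n) (π : Equiv.Perm (Fin n))

lemma perm_inv_apply (hπ : π * π = 1) : ∀ x, π (π x) = x := by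
  intro x
  have := Equiv.ext_iff.mp hπ x
  simpa [Equiv.Perm.mul_apply] using this

lemma contains_iff (hπ : π * π = 1) :
    ContainsSubseq π τ ↔ StrictMono (fun m => π (Fin.castLE hn (τ m))) := by
  constructor
  · rintro ⟨ι, hmono, hval⟩
    have hιeq : ∀ m, ι m = π (Fin.castLE hn (τ m)) := by
      intro m
      have h1 : π (ι m) = Fin.castLE hn (τ m) := Fin.ext (hval m)
      have := congrArg π h1
      rwa [perm_inv_apply π hπ] at this
    have : (fun m => π (Fin.castLE hn (τ m))) = ι := funext fun m => (hιeq m).symm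
    rw [this]; exact hmono
  · intro h
    refine ⟨fun m => π (Fin.castLE hn (τ m)), h, fun m => ?_⟩
    rw [perm_inv_apply π hπ]
    rfl
end Fwd

lemma card_filter_val_lt {k : ℕ} (j : ℕ) (hj : j ≤ k) :
    (Finset.univ.filter fun m : Fin k => m.val < j).card = j := by
  have : (Finset.univ.filter fun m : Fin k => m.val < j) =
      (Finset.range j).attachFin (fun m hm => lt_of_lt_of_le (Finset.mem_range.mp hm) hj) := by
    ext m; simp [Finset.mem_attachFin]
  rw [this, Finset.card_attachFin, Finset.card_range]

lemma mem_of_lowerset {k : ℕ} (s : Finset (Fin k))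
    (hs : ∀ a b : Fin k, a ≤ b → b ∈ s → a ∈ s) (m : Fin k) :
    m ∈ s ↔ m.val < s.card := by
  constructor
  · intro hm
    have hsub : (Finset.univ.filter fun x : Fin k => x.val < m.val + 1) ⊆ s := by
      intro x hx
      simp only [Finset.mem_filter] at hx
      exact hs x m (by omega) hm
    have := Finset.card_le_card hsub
    rwa [card_filter_val_lt (m.val+1) (by omega)] at this
  · intro hm
    by_contra hms
    have hsub : s ⊆ Finset.univ.filter fun x : Fin k => x.val < m.val := by
      intro x hx
      simp only [Finset.mem_filter, Finset.mem_univ, true_and]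
      by_contra hxm
      exact hms (hs m x (by omega) hx)
    have := Finset.card_le_card hsub
    rw [card_filter_val_lt m.val (by omega)] at this
    omega

section Fwd2
variable {k n : ℕ} (τ : Equiv.Perm (Fin k)) (hn : k ≤ n) (π : Equiv.Perm (Fin n))

def jval : ℕ := (Finset.univ.filter fun m : Fin k => (π (Fin.castLE hn (τ m))).val < k).card

lemma jval_le : jval τ hn π ≤ k := by
  have := Finset.card_filter_le Finset.univ (fun m : Fin k => (π (Fin.castLE hn (τ m))).val < k)
  simpa [jval] using this

lemma lt_k_iff (hf : StrictMono (fun m => π (Fin.castLE hn (τ m)))) (m : Fin k) :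
    (π (Fin.castLE hn (τ m))).val < k ↔ m.val < jval τ hn π := by
  classical
  have := mem_of_lowerset (Finset.univ.filter fun m : Fin k => (π (Fin.castLE hn (τ m))).val < k)
    (fun a b hab hb => by
      simp only [Finset.mem_filter, Finset.mem_univ, true_and] at hb ⊢
      have : π (Fin.castLE hn (τ a)) ≤ π (Fin.castLE hn (τ b)) := hf.monotone hab
      have := Fin.le_def.mp this
      omega) m
  simp only [Finset.mem_filter, Finset.mem_univ, true_and] at this
  exact this.trans (by rfl)

end Fwd2

section Fwd3
variable {k n : ℕ} (τ : Equiv.Perm (Fin k)) (hn : k ≤ n) (π : Equiv.Perm (Fin n))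

lemma exists_pattern (hπ : π * π = 1)
    (hf : StrictMono (fun m => π (Fin.castLE hn (τ m)))) :
    ∃ p : Equiv.Perm (Fin (jval τ hn π)),
      IsPattern (fun m : Fin (jval τ hn π) => τ (Fin.castLE (jval_le τ hn π) m)) p ∧
      p * p = 1 ∧
      ∀ m : Fin (jval τ hn π),
        π (Fin.castLE hn (τ (Fin.castLE (jval_le τ hn π) m)))
          = Fin.castLE hn (τ (Fin.castLE (jval_le τ hn π) (p m))) := by
  set j := jval τ hn π with hj
  have hjk : j ≤ k := jval_le τ hn π
  set f : Fin k → Fin n := fun m => π (Fin.castLE hn (τ m)) with hfdef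
  have hL4 : ∀ m : Fin k, (f m).val < k ↔ m.val < j := lt_k_iff τ hn π hf
  have hfk : ∀ m : Fin j, (f (Fin.castLE hjk m)).val < k :=
    fun m => (hL4 _).mpr (by simpa using m.isLt)
  have hπf : ∀ m : Fin k, π (f m) = Fin.castLE hn (τ m) := fun m => perm_inv_apply π hπ _
  set q : Fin j → Fin j := fun m =>
    ⟨(τ.symm ⟨(f (Fin.castLE hjk m)).val, hfk m⟩).val, by
      rw [← hL4]
      have h2 : Fin.castLE hn (⟨(f (Fin.castLE hjk m)).val, hfk m⟩ : Fin k)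
          = f (Fin.castLE hjk m) := Fin.ext rfl
      show (π (Fin.castLE hn (τ (τ.symm ⟨(f (Fin.castLE hjk m)).val, hfk m⟩)))).val < k
      rw [Equiv.apply_symm_apply, h2, hπf]
      simp [Fin.castLE]⟩ with hqdef
  have key1 : ∀ m : Fin j, Fin.castLE hn (τ (Fin.castLE hjk (q m))) = f (Fin.castLE hjk m) := by
    intro m
    have : Fin.castLE hjk (q m) = τ.symm ⟨(f (Fin.castLE hjk m)).val, hfk m⟩ := Fin.ext rfl
    rw [this, Equiv.apply_symm_apply]
    exact Fin.ext rfl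
  have key2 : ∀ m : Fin j, f (Fin.castLE hjk (q m)) = Fin.castLE hn (τ (Fin.castLE hjk m)) := by
    intro m
    show π _ = _
    rw [key1 m]
    exact hπf _
  have hq : Function.Involutive q := by
    intro m
    have h1 : Fin.castLE hn (τ (Fin.castLE hjk (q (q m)))) = Fin.castLE hn (τ (Fin.castLE hjk m)) := by
      rw [key1 (q m), key2 m]
    have h2 : τ (Fin.castLE hjk (q (q m))) = τ (Fin.castLE hjk m) :=
      Fin.castLE_injective hn h1
    exact Fin.castLE_injective hjk (τ.injective h2)
  refine ⟨hq.toPerm q, ?_, ?_, ?_⟩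
  · intro a b
    show q a ≤ q b ↔ τ (Fin.castLE hjk a) ≤ τ (Fin.castLE hjk b)
    have hstep : ∀ a b : Fin j, (τ (Fin.castLE hjk a) ≤ τ (Fin.castLE hjk b)
        ↔ f (Fin.castLE hjk (q a)) ≤ f (Fin.castLE hjk (q b))) := by
      intro a b
      rw [key2 a, key2 b]
      constructor
      · intro h; exact Fin.le_def.mpr (Fin.le_def.mp h)
      · intro h; exact Fin.le_def.mpr (Fin.le_def.mp h)
    rw [hstep a b, hf.le_iff_le]
    constructor
    · intro h; exact Fin.le_def.mpr (Fin.le_def.mp h)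
    · intro h; exact Fin.le_def.mpr (Fin.le_def.mp h)
  · ext m
    simp [Function.Involutive.toPerm, hq m]
  · intro m
    show f (Fin.castLE hjk m) = _
    rw [← key1 m]
    rfl
end Fwd3

def Kset (k n : ℕ) : Finset (Fin n) := Finset.univ.filter fun x => k ≤ x.val

def Cset (k : ℕ) {n : ℕ} (π : Equiv.Perm (Fin n)) : Finset (Fin n) :=
  Finset.univ.filter fun x => k ≤ x.val ∧ (π x).val < k

lemma Kset_card {k n : ℕ} (hn : k ≤ n) : (Kset k n).card = n - k := by
  classical
  have h1 : (Finset.univ.filter fun x : Fin n => ¬ k ≤ x.val).card = k := by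
    have : (Finset.univ.filter fun x : Fin n => ¬ k ≤ x.val)
        = Finset.univ.filter fun x : Fin n => x.val < k := by
      ext x; simp only [Finset.mem_filter, Finset.mem_univ, true_and]; omega
    rw [this]
    exact card_filter_val_lt k hn
  have h2 := Finset.card_filter_add_card_filter_not
    (s := (Finset.univ : Finset (Fin n))) (p := fun x => k ≤ x.val)
  rw [h1] at h2
  simp only [Finset.card_univ, Fintype.card_fin] at h2
  unfold Kset
  omega

section Fwd4
variable {k n : ℕ} (τ : Equiv.Perm (Fin k)) (hn : k ≤ n) (π : Equiv.Perm (Fin n))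

def cEnum (i : Fin (k - jval τ hn π)) : Fin n :=
  π (Fin.castLE hn (τ ⟨jval τ hn π + i.val, by have := i.isLt; omega⟩))

variable (hπ : π * π = 1) (hf : StrictMono (fun m => π (Fin.castLE hn (τ m))))
include hπ hf

lemma cEnum_mem (i : Fin (k - jval τ hn π)) : cEnum τ hn π i ∈ Cset k π := by
  unfold cEnum Cset
  simp only [Finset.mem_filter, Finset.mem_univ, true_and]
  constructor
  · have := (lt_k_iff τ hn π hf ⟨jval τ hn π + i.val, by have := i.isLt; omega⟩)
    simp only at this
    omega
  · rw [perm_inv_apply π hπ]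
    simp [Fin.castLE]

omit hπ in
lemma cEnum_strictMono : StrictMono (cEnum τ hn π) := by
  intro a b hab
  exact hf (by simp only [Fin.mk_lt_mk]; have := Fin.lt_def.mp hab; omega)

lemma cEnum_surj (x : Fin n) (hx : x ∈ Cset k π) :
    ∃ i : Fin (k - jval τ hn π), cEnum τ hn π i = x := by
  unfold Cset at hx
  simp only [Finset.mem_filter, Finset.mem_univ, true_and] at hx
  obtain ⟨hxk, hπxk⟩ := hx
  set m : Fin k := τ.symm ⟨(π x).val, hπxk⟩ with hm
  have hfm : π (Fin.castLE hn (τ m)) = x := by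
    rw [hm, Equiv.apply_symm_apply]
    have : Fin.castLE hn (⟨(π x).val, hπxk⟩ : Fin k) = π x := Fin.ext rfl
    rw [this, perm_inv_apply π hπ]
  have hmj : jval τ hn π ≤ m.val := by
    by_contra hlt
    have := (lt_k_iff τ hn π hf m).mpr (by omega)
    rw [hfm] at this
    omega
  have hjk : jval τ hn π ≤ k := jval_le τ hn π
  refine ⟨⟨m.val - jval τ hn π, by have := m.isLt; omega⟩, ?_⟩
  unfold cEnum
  have : (⟨jval τ hn π + (m.val - jval τ hn π), by have := m.isLt; omega⟩ : Fin k) = m :=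
    Fin.ext (by simp only; omega)
  rw [this, hfm]

lemma Cset_card : (Cset k π).card = k - jval τ hn π := by
  classical
  have himg : Cset k π = Finset.image (cEnum τ hn π) Finset.univ := by
    ext x
    simp only [Finset.mem_image, Finset.mem_univ, true_and]
    constructor
    · intro hx; exact cEnum_surj τ hn π hπ hf x hx
    · rintro ⟨i, rfl⟩; exact cEnum_mem τ hn π hπ hf i
  rw [himg, Finset.card_image_of_injective _ (cEnum_strictMono τ hn π hf).injective]
  simp

lemma cEnum_eq_orderEmb :
    cEnum τ hn π = (Cset k π).orderEmbOfFin (Cset_card τ hn π hπ hf) :=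
  Finset.orderEmbOfFin_unique _ (fun i => cEnum_mem τ hn π hπ hf i)
    (cEnum_strictMono τ hn π hf)

end Fwd4

section Fwd5
variable {k n : ℕ} (τ : Equiv.Perm (Fin k)) (hn : k ≤ n) (π : Equiv.Perm (Fin n))

lemma Cset_subset_Kset : Cset k π ⊆ Kset k n := by
  intro x hx
  unfold Cset at hx
  unfold Kset
  simp only [Finset.mem_filter, Finset.mem_univ, true_and] at hx ⊢
  exact hx.1

lemma Dset_eq : Kset k n \ Cset k π
    = Finset.univ.filter fun x => k ≤ x.val ∧ k ≤ (π x).val := by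
  ext x
  unfold Kset Cset
  simp only [Finset.mem_sdiff, Finset.mem_filter, Finset.mem_univ, true_and]
  omega

lemma Dset_card (hn : k ≤ n) (hπ : π * π = 1)
    (hf : StrictMono (fun m => π (Fin.castLE hn (τ m)))) :
    (Kset k n \ Cset k π).card = n + jval τ hn π - 2 * k := by
  rw [Finset.card_sdiff_of_subset (Cset_subset_Kset π), Kset_card hn, Cset_card τ hn π hπ hf]
  have h1 : jval τ hn π ≤ k := jval_le τ hn π
  have h2 : k - jval τ hn π ≤ n - k := by
    rw [← Cset_card τ hn π hπ hf, ← Kset_card hn]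
    exact Finset.card_le_card (Cset_subset_Kset π)
  omega

lemma Dset_stable (hπ : π * π = 1) :
    ∀ x : Fin n, x ∈ Kset k n \ Cset k π ↔ π x ∈ Kset k n \ Cset k π := by
  intro x
  rw [Dset_eq π]
  simp only [Finset.mem_filter, Finset.mem_univ, true_and]
  rw [perm_inv_apply π hπ]
  omega

end Fwd5

lemma mem_Kset_le {k n : ℕ} {x : Fin n} (hx : x ∈ Kset k n) : k ≤ x.val := by
  simpa only [Kset, Finset.mem_filter, Finset.mem_univ, true_and] using hx

lemma orderIso_symm_emb {α : Type*} [LinearOrder α] (s : Finset α) {m : ℕ} (h : s.card = m)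
    (i : Fin m) (hx : s.orderEmbOfFin h i ∈ s) :
    (s.orderIsoOfFin h).symm ⟨s.orderEmbOfFin h i, hx⟩ = i := by
  have h2 : (⟨s.orderEmbOfFin h i, hx⟩ : {x // x ∈ s}) = s.orderIsoOfFin h i :=
    Subtype.ext (Finset.coe_orderIsoOfFin_apply s h i).symm
  rw [h2]
  exact (s.orderIsoOfFin h).symm_apply_apply i

section Build
variable {k n : ℕ} (τ : Equiv.Perm (Fin k)) (hn : k ≤ n) {j : ℕ} (hjk : j ≤ k)
  (p : Equiv.Perm (Fin j)) (C : Finset (Fin n)) (hCcard : C.card = k - j)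
  (hCK : C ⊆ Kset k n) (σ : Equiv.Perm (Fin (n + j - 2*k)))
  (hDcard : (Kset k n \ C).card = n + j - 2*k)

def build : Fin n → Fin n := fun x =>
  if h : x.val < k then
    if hm : (τ.symm ⟨x.val, h⟩).val < j then
      Fin.castLE hn (τ (Fin.castLE hjk (p ⟨(τ.symm ⟨x.val, h⟩).val, hm⟩)))
    else C.orderEmbOfFin hCcard
      ⟨(τ.symm ⟨x.val, h⟩).val - j, by have := (τ.symm ⟨x.val, h⟩).isLt; omega⟩
  else if hx : x ∈ C then
    Fin.castLE hn (τ ⟨j + ((C.orderIsoOfFin hCcard).symm ⟨x, hx⟩).val, by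
      have := ((C.orderIsoOfFin hCcard).symm ⟨x, hx⟩).isLt; omega⟩)
  else
    ((Kset k n \ C).orderEmbOfFin hDcard) (σ (((Kset k n \ C).orderIsoOfFin hDcard).symm
      ⟨x, by
        simp only [Finset.mem_sdiff]
        refine ⟨?_, hx⟩
        simp only [Kset, Finset.mem_filter, Finset.mem_univ, true_and]
        omega⟩))

lemma build_lt (m : Fin k) (hm : m.val < j) :
    build τ hn hjk p C hCcard σ hDcard (Fin.castLE hn (τ m))
      = Fin.castLE hn (τ (Fin.castLE hjk (p ⟨m.val, hm⟩))) := by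
  unfold build
  split_ifs with h1 h2
  · have hsym : τ.symm ⟨(Fin.castLE hn (τ m)).val, h1⟩ = m := by
      have he : (⟨(Fin.castLE hn (τ m)).val, h1⟩ : Fin k) = τ m := Fin.ext rfl
      rw [he]; exact τ.symm_apply_apply m
    have he2 : (⟨(τ.symm ⟨(Fin.castLE hn (τ m)).val, h1⟩).val, h2⟩ : Fin j)
        = ⟨m.val, hm⟩ := Fin.ext (by simpa using congrArg Fin.val hsym)
    rw [he2]
  · exfalso
    have hsym : τ.symm ⟨(Fin.castLE hn (τ m)).val, h1⟩ = m := by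
      have he : (⟨(Fin.castLE hn (τ m)).val, h1⟩ : Fin k) = τ m := Fin.ext rfl
      rw [he]; exact τ.symm_apply_apply m
    rw [hsym] at h2
    exact h2 hm
  · exact absurd (τ m).isLt h1
  · exact absurd (τ m).isLt h1

lemma build_ge (m : Fin k) (hm : j ≤ m.val) :
    build τ hn hjk p C hCcard σ hDcard (Fin.castLE hn (τ m))
      = C.orderEmbOfFin hCcard ⟨m.val - j, by have := m.isLt; omega⟩ := by
  unfold build
  split_ifs with h1 h2
  · exfalso
    have hsym : τ.symm ⟨(Fin.castLE hn (τ m)).val, h1⟩ = m := by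
      have he : (⟨(Fin.castLE hn (τ m)).val, h1⟩ : Fin k) = τ m := Fin.ext rfl
      rw [he]; exact τ.symm_apply_apply m
    rw [hsym] at h2
    omega
  · have hsym : τ.symm ⟨(Fin.castLE hn (τ m)).val, h1⟩ = m := by
      have he : (⟨(Fin.castLE hn (τ m)).val, h1⟩ : Fin k) = τ m := Fin.ext rfl
      rw [he]; exact τ.symm_apply_apply m
    congr 1
    exact Fin.ext (by simp only; rw [congrArg Fin.val hsym])
  · exact absurd (τ m).isLt h1
  · exact absurd (τ m).isLt h1

lemma build_C (x : Fin n) (hxk : ¬ x.val < k) (hx : x ∈ C) :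
    build τ hn hjk p C hCcard σ hDcard x
      = Fin.castLE hn (τ ⟨j + ((C.orderIsoOfFin hCcard).symm ⟨x, hx⟩).val, by
          have := ((C.orderIsoOfFin hCcard).symm ⟨x, hx⟩).isLt; omega⟩) := by
  unfold build
  rw [dif_neg hxk, dif_pos hx]

lemma build_D (x : Fin n) (hx : x ∈ Kset k n \ C) :
    build τ hn hjk p C hCcard σ hDcard x
      = ((Kset k n \ C).orderEmbOfFin hDcard)
          (σ (((Kset k n \ C).orderIsoOfFin hDcard).symm ⟨x, hx⟩)) := by
  have hxk : ¬ x.val < k := by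
    have := (Finset.mem_sdiff.mp hx).1
    simp only [Kset, Finset.mem_filter, Finset.mem_univ, true_and] at this
    omega
  have hxC : x ∉ C := (Finset.mem_sdiff.mp hx).2
  unfold build
  rw [dif_neg hxk, dif_neg hxC]

end Build

section Build2
variable {k n : ℕ} (τ : Equiv.Perm (Fin k)) (hn : k ≤ n) {j : ℕ} (hjk : j ≤ k)
  (p : Equiv.Perm (Fin j)) (C : Finset (Fin n)) (hCcard : C.card = k - j)
  (hCK : C ⊆ Kset k n) (σ : Equiv.Perm (Fin (n + j - 2*k)))
  (hDcard : (Kset k n \ C).card = n + j - 2*k)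

include hCK in
lemma mem_C_not_lt (x : Fin n) (hx : x ∈ C) : ¬ x.val < k := by
  have := hCK hx
  simp only [Kset, Finset.mem_filter, Finset.mem_univ, true_and] at this
  omega

lemma castLE_eq_self (x : Fin n) (h : x.val < k) :
    Fin.castLE hn (τ (τ.symm ⟨x.val, h⟩)) = x := by
  rw [Equiv.apply_symm_apply]
  exact Fin.ext rfl

include hCK in
lemma build_involutive (hp : p * p = 1) (hσ : σ * σ = 1) :
    Function.Involutive (build τ hn hjk p C hCcard σ hDcard) := by
  have hpp : ∀ a, p (p a) = a := fun a => by
    have := Equiv.ext_iff.mp hp a; simpa [Equiv.Perm.mul_apply] using this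
  have hσσ : ∀ a, σ (σ a) = a := fun a => by
    have := Equiv.ext_iff.mp hσ a; simpa [Equiv.Perm.mul_apply] using this
  intro x
  by_cases h : x.val < k
  · set m : Fin k := τ.symm ⟨x.val, h⟩ with hm
    have hx : x = Fin.castLE hn (τ m) := (castLE_eq_self τ hn x h).symm
    by_cases hmj : m.val < j
    · rw [hx, build_lt τ hn hjk p C hCcard σ hDcard m hmj]
      have h2 : (Fin.castLE hjk (p ⟨m.val, hmj⟩)).val < j := (p ⟨m.val, hmj⟩).isLt
      rw [build_lt τ hn hjk p C hCcard σ hDcard _ h2]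
      have h3 : (⟨(Fin.castLE hjk (p ⟨m.val, hmj⟩)).val, h2⟩ : Fin j) = p ⟨m.val, hmj⟩ :=
        Fin.ext rfl
      rw [h3, hpp]
      have h4 : Fin.castLE hjk (⟨m.val, hmj⟩ : Fin j) = m := Fin.ext rfl
      rw [h4]
    · rw [hx, build_ge τ hn hjk p C hCcard σ hDcard m (by omega)]
      set i : Fin (k - j) := ⟨m.val - j, by have := m.isLt; omega⟩ with hi
      have hmemC : C.orderEmbOfFin hCcard i ∈ C := Finset.orderEmbOfFin_mem C hCcard i
      rw [build_C τ hn hjk p C hCcard σ hDcard _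
        (mem_C_not_lt C hCK _ hmemC) hmemC]
      simp only [orderIso_symm_emb C hCcard i hmemC]
      have h5 : (⟨j + i.val, by have := i.isLt; omega⟩ : Fin k) = m :=
        Fin.ext (by simp only [hi]; omega)
      rw [h5]
  · by_cases hxC : x ∈ C
    · rw [build_C τ hn hjk p C hCcard σ hDcard x h hxC]
      set i := (C.orderIsoOfFin hCcard).symm ⟨x, hxC⟩ with hidef
      set m : Fin k := ⟨j + i.val, by have := i.isLt; omega⟩ with hmdef
      rw [build_ge τ hn hjk p C hCcard σ hDcard m (by simp [hmdef])]
      have h6 : (⟨m.val - j, by have := m.isLt; omega⟩ : Fin (k - j)) = i :=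
        Fin.ext (by simp [hmdef])
      rw [h6, hidef]
      have := congrArg Subtype.val ((C.orderIsoOfFin hCcard).apply_symm_apply ⟨x, hxC⟩)
      rw [Finset.coe_orderIsoOfFin_apply] at this
      exact this
    · have hxD : x ∈ Kset k n \ C := by
        simp only [Finset.mem_sdiff]
        refine ⟨?_, hxC⟩
        simp only [Kset, Finset.mem_filter, Finset.mem_univ, true_and]
        omega
      rw [build_D τ hn hjk p C hCcard σ hDcard x hxD]
      set i := ((Kset k n \ C).orderIsoOfFin hDcard).symm ⟨x, hxD⟩ with hidef
      have hmemD : (Kset k n \ C).orderEmbOfFin hDcard (σ i) ∈ Kset k n \ C :=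
        Finset.orderEmbOfFin_mem _ hDcard _
      rw [build_D τ hn hjk p C hCcard σ hDcard _ hmemD]
      rw [orderIso_symm_emb _ hDcard _ hmemD, hσσ, hidef]
      have := congrArg Subtype.val
        (((Kset k n \ C).orderIsoOfFin hDcard).apply_symm_apply ⟨x, hxD⟩)
      rw [Finset.coe_orderIsoOfFin_apply] at this
      exact this

end Build2

section Build3
variable {k n : ℕ} (τ : Equiv.Perm (Fin k)) (hn : k ≤ n) {j : ℕ} (hjk : j ≤ k)
  (p : Equiv.Perm (Fin j)) (C : Finset (Fin n)) (hCcard : C.card = k - j)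
  (hCK : C ⊆ Kset k n) (σ : Equiv.Perm (Fin (n + j - 2*k)))
  (hDcard : (Kset k n \ C).card = n + j - 2*k)
  (hp : p * p = 1) (hσ : σ * σ = 1)
  (hpat : IsPattern (fun m : Fin j => τ (Fin.castLE hjk m)) p)

noncomputable def buildPerm : Equiv.Perm (Fin n) :=
  Function.Involutive.toPerm _ (build_involutive τ hn hjk p C hCcard hCK σ hDcard hp hσ)

lemma buildPerm_apply (x : Fin n) :
    buildPerm τ hn hjk p C hCcard hCK σ hDcard hp hσ x
      = build τ hn hjk p C hCcard σ hDcard x := rfl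

lemma buildPerm_invol :
    buildPerm τ hn hjk p C hCcard hCK σ hDcard hp hσ
      * buildPerm τ hn hjk p C hCcard hCK σ hDcard hp hσ = 1 := by
  ext x
  simp only [Equiv.Perm.mul_apply, buildPerm_apply, Equiv.Perm.one_apply]
  exact congrArg Fin.val (build_involutive τ hn hjk p C hCcard hCK σ hDcard hp hσ x)

include hpat in
lemma buildPerm_strictMono :
    StrictMono (fun m : Fin k =>
      buildPerm τ hn hjk p C hCcard hCK σ hDcard hp hσ (Fin.castLE hn (τ m))) := by
  intro a b hab
  simp only [buildPerm_apply]
  by_cases hbj : b.val < j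
  · have haj : a.val < j := lt_of_lt_of_le (Fin.lt_def.mp hab) (by omega)
    rw [build_lt τ hn hjk p C hCcard σ hDcard a haj, build_lt τ hn hjk p C hCcard σ hDcard b hbj]
    have key : τ (Fin.castLE hjk (p ⟨a.val, haj⟩)) < τ (Fin.castLE hjk (p ⟨b.val, hbj⟩)) := by
      have h1 := hpat (p ⟨a.val, haj⟩) (p ⟨b.val, hbj⟩)
      have hpp : ∀ c, p (p c) = c := fun c => by
        have := Equiv.ext_iff.mp hp c; simpa [Equiv.Perm.mul_apply] using this
      rw [hpp, hpp] at h1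
      have hle : τ (Fin.castLE hjk (p ⟨a.val, haj⟩)) ≤ τ (Fin.castLE hjk (p ⟨b.val, hbj⟩)) :=
        h1.mp (by exact le_of_lt (by exact Fin.lt_def.mpr (by simpa using Fin.lt_def.mp hab)))
      rcases lt_or_eq_of_le hle with h | h
      · exact h
      · exfalso
        have h2 := Fin.castLE_injective hjk (τ.injective h)
        have h3 := p.injective h2
        have h4 := congrArg Fin.val h3
        simp only at h4
        have := Fin.lt_def.mp hab
        omega
    exact Fin.lt_def.mpr (by simpa using Fin.lt_def.mp key)
  · by_cases haj : a.val < j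
    · rw [build_lt τ hn hjk p C hCcard σ hDcard a haj,
        build_ge τ hn hjk p C hCcard σ hDcard b (by omega)]
      have h1 : (Fin.castLE hn (τ (Fin.castLE hjk (p ⟨a.val, haj⟩)))).val < k :=
        (τ _).isLt
      have h2 : k ≤ ((C.orderEmbOfFin hCcard) ⟨b.val - j, by have := b.isLt; omega⟩).val := by
        have := hCK (Finset.orderEmbOfFin_mem C hCcard ⟨b.val - j, by have := b.isLt; omega⟩)
        simp only [Kset, Finset.mem_filter, Finset.mem_univ, true_and] at this
        exact this
      exact Fin.lt_def.mpr (by omega)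
    · rw [build_ge τ hn hjk p C hCcard σ hDcard a (by omega),
        build_ge τ hn hjk p C hCcard σ hDcard b (by omega)]
      apply (C.orderEmbOfFin hCcard).strictMono
      exact Fin.lt_def.mpr (by simp only; have := Fin.lt_def.mp hab; omega)

end Build3

section Build4
variable {k n : ℕ} (τ : Equiv.Perm (Fin k)) (hn : k ≤ n) {j : ℕ} (hjk : j ≤ k)
  (p : Equiv.Perm (Fin j)) (C : Finset (Fin n)) (hCcard : C.card = k - j)
  (hCK : C ⊆ Kset k n) (σ : Equiv.Perm (Fin (n + j - 2*k)))
  (hDcard : (Kset k n \ C).card = n + j - 2*k)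
  (hp : p * p = 1) (hσ : σ * σ = 1)

lemma buildPerm_lt_iff (m : Fin k) :
    (buildPerm τ hn hjk p C hCcard hCK σ hDcard hp hσ (Fin.castLE hn (τ m))).val < k
      ↔ m.val < j := by
  constructor
  · intro h
    by_contra hmj
    rw [buildPerm_apply, build_ge τ hn hjk p C hCcard σ hDcard m (by omega)] at h
    have := hCK (Finset.orderEmbOfFin_mem C hCcard ⟨m.val - j, by have := m.isLt; omega⟩)
    simp only [Kset, Finset.mem_filter, Finset.mem_univ, true_and] at this
    omega
  · intro h
    rw [buildPerm_apply, build_lt τ hn hjk p C hCcard σ hDcard m h]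
    exact (τ _).isLt

lemma buildPerm_jval :
    jval τ hn (buildPerm τ hn hjk p C hCcard hCK σ hDcard hp hσ) = j := by
  unfold jval
  have : (Finset.univ.filter fun m : Fin k =>
      (buildPerm τ hn hjk p C hCcard hCK σ hDcard hp hσ (Fin.castLE hn (τ m))).val < k)
      = Finset.univ.filter fun m : Fin k => m.val < j := by
    ext m
    simp only [Finset.mem_filter, Finset.mem_univ, true_and]
    exact buildPerm_lt_iff τ hn hjk p C hCcard hCK σ hDcard hp hσ m
  rw [this, card_filter_val_lt j hjk]

lemma buildPerm_Cset :
    Cset k (buildPerm τ hn hjk p C hCcard hCK σ hDcard hp hσ) = C := by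
  ext x
  simp only [Cset, Finset.mem_filter, Finset.mem_univ, true_and]
  constructor
  · rintro ⟨hxk, hbx⟩
    by_contra hxC
    have hxD : x ∈ Kset k n \ C := by
      simp only [Finset.mem_sdiff]
      exact ⟨by simp only [Kset, Finset.mem_filter, Finset.mem_univ, true_and]; omega, hxC⟩
    rw [buildPerm_apply, build_D τ hn hjk p C hCcard σ hDcard x hxD] at hbx
    have hK := mem_Kset_le (Finset.mem_sdiff.mp (Finset.orderEmbOfFin_mem (Kset k n \ C) hDcard
      (σ (((Kset k n \ C).orderIsoOfFin hDcard).symm ⟨x, hxD⟩)))).1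
    omega
  · intro hxC
    have hxk : ¬ x.val < k := mem_C_not_lt C hCK x hxC
    refine ⟨by omega, ?_⟩
    rw [buildPerm_apply, build_C τ hn hjk p C hCcard σ hDcard x hxk hxC]
    exact (τ _).isLt

lemma buildPerm_D_apply (i : Fin (n + j - 2*k)) :
    buildPerm τ hn hjk p C hCcard hCK σ hDcard hp hσ
        ((Kset k n \ C).orderEmbOfFin hDcard i)
      = (Kset k n \ C).orderEmbOfFin hDcard (σ i) := by
  have hmem : (Kset k n \ C).orderEmbOfFin hDcard i ∈ Kset k n \ C :=
    Finset.orderEmbOfFin_mem _ hDcard i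
  rw [buildPerm_apply, build_D τ hn hjk p C hCcard σ hDcard _ hmem,
    orderIso_symm_emb _ hDcard i hmem]

end Build4

section Sigma
variable {k n j : ℕ}

noncomputable def sigmaOf (k j : ℕ) {n : ℕ} (π : Equiv.Perm (Fin n)) :
    Equiv.Perm (Fin (n + j - 2*k)) :=
  if h : (Kset k n \ Cset k π).card = n + j - 2*k
      ∧ ∀ x, x ∈ Kset k n \ Cset k π ↔ π x ∈ Kset k n \ Cset k π then
    (((Kset k n \ Cset k π).orderIsoOfFin h.1).toEquiv.permCongr).symm
      (π.subtypePerm (fun x => (h.2 x).symm))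
  else 1

lemma sigmaOf_spec (π : Equiv.Perm (Fin n))
    (hD : (Kset k n \ Cset k π).card = n + j - 2*k)
    (hst : ∀ x, x ∈ Kset k n \ Cset k π ↔ π x ∈ Kset k n \ Cset k π)
    (i : Fin (n + j - 2*k)) :
    (Kset k n \ Cset k π).orderEmbOfFin hD (sigmaOf k j π i)
      = π ((Kset k n \ Cset k π).orderEmbOfFin hD i) := by
  unfold sigmaOf
  rw [dif_pos ⟨hD, hst⟩]
  set D := Kset k n \ Cset k π
  set e := (D.orderIsoOfFin hD).toEquiv with he
  have h1 : (e.permCongr.symm (π.subtypePerm (fun x => (hst x).symm))) i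
      = e.symm ((π.subtypePerm (fun x => (hst x).symm)) (e i)) := by
    simp [Equiv.permCongr_symm, Equiv.permCongr_apply]
  rw [h1]
  have h2 : ∀ y : {x // x ∈ D}, D.orderEmbOfFin hD (e.symm y) = y.val := by
    intro y
    have : e (e.symm y) = y := e.apply_symm_apply y
    have := congrArg Subtype.val this
    rwa [he, show ((D.orderIsoOfFin hD).toEquiv (e.symm y)).val
      = D.orderEmbOfFin hD (e.symm y) from Finset.coe_orderIsoOfFin_apply D hD _] at this
  rw [h2]
  have h3 : ((π.subtypePerm (fun x => (hst x).symm)) (e i)).val = π (e i).val := rfl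
  rw [h3, he]
  exact congrArg π (Finset.coe_orderIsoOfFin_apply D hD _)

lemma sigmaOf_invol (π : Equiv.Perm (Fin n)) (hπ : π * π = 1)
    (hD : (Kset k n \ Cset k π).card = n + j - 2*k)
    (hst : ∀ x, x ∈ Kset k n \ Cset k π ↔ π x ∈ Kset k n \ Cset k π) :
    sigmaOf k j π * sigmaOf k j π = 1 := by
  have key : ∀ i, sigmaOf k j π (sigmaOf k j π i) = i := by
    intro i
    apply ((Kset k n \ Cset k π).orderEmbOfFin hD).injective
    rw [sigmaOf_spec π hD hst, sigmaOf_spec π hD hst, perm_inv_apply π hπ]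
  ext i
  simp only [Equiv.Perm.mul_apply, Equiv.Perm.one_apply, key i]

end Sigma

lemma perm_val_eq_card {j : ℕ} (p : Equiv.Perm (Fin j)) (a : Fin j) :
    (p a).val = (Finset.univ.filter fun b => p b < p a).card := by
  have himg : (Finset.univ.filter fun b => p b < p a).image p
      = Finset.univ.filter fun c : Fin j => c < p a := by
    ext c
    simp only [Finset.mem_image, Finset.mem_filter, Finset.mem_univ, true_and]
    constructor
    · rintro ⟨b, hb, rfl⟩; exact hb
    · intro hc; exact ⟨p.symm c, by simpa using hc, by simp⟩
  have h2 := Finset.card_image_of_injective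
    (Finset.univ.filter fun b => p b < p a) p.injective
  rw [himg] at h2
  rw [← h2]
  have h3 : (Finset.univ.filter fun c : Fin j => c < p a)
      = Finset.univ.filter fun c : Fin j => c.val < (p a).val := by
    ext c; simp only [Finset.mem_filter, Finset.mem_univ, true_and, Fin.lt_def]
  rw [h3, card_filter_val_lt _ (le_of_lt (p a).isLt)]

lemma pattern_unique {j : ℕ} {α : Type*} [LinearOrder α] {w : Fin j → α}
    {p q : Equiv.Perm (Fin j)} (hp : IsPattern w p) (hq : IsPattern w q) : p = q := by
  have key : ∀ r : Equiv.Perm (Fin j), IsPattern w r → ∀ a,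
      (r a).val = (Finset.univ.filter fun b => w b < w a).card := by
    intro r hr a
    rw [perm_val_eq_card]
    congr 1
    ext b
    simp only [Finset.mem_filter, Finset.mem_univ, true_and]
    rw [lt_iff_not_ge, lt_iff_not_ge, hr a b]
  ext a
  rw [show (p a : ℕ) = ((p a : Fin j) : ℕ) from rfl, key p hp a, ← key q hq a]

section Recon
variable {k n : ℕ} (τ : Equiv.Perm (Fin k)) (hn : k ≤ n) (π : Equiv.Perm (Fin n))

lemma build_eq_self (hπ : π * π = 1)
    (hf : StrictMono (fun m => π (Fin.castLE hn (τ m))))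
    (p : Equiv.Perm (Fin (jval τ hn π)))
    (hpat : IsPattern (fun m : Fin (jval τ hn π) => τ (Fin.castLE (jval_le τ hn π) m)) p)
    (hp : p * p = 1)
    (hσ : sigmaOf k (jval τ hn π) π * sigmaOf k (jval τ hn π) π = 1)
    (hD : (Kset k n \ Cset k π).card = n + jval τ hn π - 2*k) :
    buildPerm τ hn (jval_le τ hn π) p (Cset k π) (Cset_card τ hn π hπ hf)
      (Cset_subset_Kset π) (sigmaOf k (jval τ hn π) π) hD hp hσ = π := by
  obtain ⟨p₀, hpat₀, hp₀, happ₀⟩ := exists_pattern τ hn π hπ hf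
  have hpeq : p = p₀ := pattern_unique hpat hpat₀
  subst hpeq
  have hjk : jval τ hn π ≤ k := jval_le τ hn π
  have hst : ∀ x, x ∈ Kset k n \ Cset k π ↔ π x ∈ Kset k n \ Cset k π := Dset_stable π hπ
  ext x
  refine congrArg Fin.val ?_
  rw [buildPerm_apply]
  by_cases h : x.val < k
  · set m : Fin k := τ.symm ⟨x.val, h⟩ with hm
    have hx : x = Fin.castLE hn (τ m) := (castLE_eq_self τ hn x h).symm
    by_cases hmj : m.val < jval τ hn π
    · rw [hx, build_lt τ hn hjk p (Cset k π) (Cset_card τ hn π hπ hf)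
        (sigmaOf k (jval τ hn π) π) hD m hmj]
      have happ := happ₀ ⟨m.val, hmj⟩
      have hcast : Fin.castLE hjk (⟨m.val, hmj⟩ : Fin (jval τ hn π)) = m := Fin.ext rfl
      rw [hcast] at happ
      exact happ.symm
    · rw [hx, build_ge τ hn hjk p (Cset k π) (Cset_card τ hn π hπ hf)
        (sigmaOf k (jval τ hn π) π) hD m (by omega)]
      have hemb := congrFun (cEnum_eq_orderEmb τ hn π hπ hf)
        ⟨m.val - jval τ hn π, by have := m.isLt; omega⟩
      rw [← hemb]
      unfold cEnum
      have hcast : (⟨jval τ hn π + (m.val - jval τ hn π), by have := m.isLt; omega⟩ : Fin k)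
          = m := Fin.ext (by simp only; omega)
      rw [hcast]
  · by_cases hxC : x ∈ Cset k π
    · rw [build_C τ hn hjk p (Cset k π) (Cset_card τ hn π hπ hf)
        (sigmaOf k (jval τ hn π) π) hD x h hxC]
      obtain ⟨i, hi⟩ := cEnum_surj τ hn π hπ hf x hxC
      have hiemb : (Cset k π).orderEmbOfFin (Cset_card τ hn π hπ hf) i = x := by
        rw [← congrFun (cEnum_eq_orderEmb τ hn π hπ hf) i, hi]
      have hmemi : (Cset k π).orderEmbOfFin (Cset_card τ hn π hπ hf) i ∈ Cset k π :=
        Finset.orderEmbOfFin_mem _ _ i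
      have hsub : (⟨x, hxC⟩ : {y // y ∈ Cset k π})
          = ⟨(Cset k π).orderEmbOfFin (Cset_card τ hn π hπ hf) i, hmemi⟩ :=
        Subtype.ext hiemb.symm
      have hsym : ((Cset k π).orderIsoOfFin (Cset_card τ hn π hπ hf)).symm ⟨x, hxC⟩ = i := by
        rw [hsub]
        exact orderIso_symm_emb _ _ i hmemi
      simp only [hsym]
      have hpx : π x = π (cEnum τ hn π i) := by rw [hi]
      rw [hpx]
      unfold cEnum
      rw [perm_inv_apply π hπ]
    · have hxD : x ∈ Kset k n \ Cset k π := by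
        rw [Finset.mem_sdiff]
        refine ⟨?_, hxC⟩
        simp only [Kset, Finset.mem_filter, Finset.mem_univ, true_and]; omega
      rw [build_D τ hn hjk p (Cset k π) (Cset_card τ hn π hπ hf)
        (sigmaOf k (jval τ hn π) π) hD x hxD]
      set i := ((Kset k n \ Cset k π).orderIsoOfFin hD).symm ⟨x, hxD⟩ with hidef
      have hembi : (Kset k n \ Cset k π).orderEmbOfFin hD i = x := by
        rw [hidef]
        have h5 := congrArg Subtype.val
          (((Kset k n \ Cset k π).orderIsoOfFin hD).apply_symm_apply ⟨x, hxD⟩)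
        rwa [Finset.coe_orderIsoOfFin_apply] at h5
      rw [sigmaOf_spec π hD hst i, hembi]
end Recon

section JF
variable {k n : ℕ} (τ : Equiv.Perm (Fin k)) (hn : k ≤ n)

lemma jfinset_spec {j : ℕ} (hj : j ∈ JFinset τ) :
    ∃ hjk : j ≤ k, ∃ p : Equiv.Perm (Fin j),
      IsPattern (fun m : Fin j => τ (Fin.castLE hjk m)) p ∧ p * p = 1 := by
  classical
  simp only [JFinset, Finset.mem_filter, Finset.mem_range] at hj
  obtain ⟨hjr, hjs⟩ := hj
  rcases hjs with h0 | ⟨h1, hini⟩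
  · have hj0 : j = 0 := h0
    subst hj0
    exact ⟨Nat.zero_le k, 1, fun a b => a.elim0, by ext a; exact a.elim0⟩
  · exact hini

lemma jval_mem_JFinset (π : Equiv.Perm (Fin n)) (hπ : π * π = 1)
    (hf : StrictMono (fun m => π (Fin.castLE hn (τ m)))) :
    jval τ hn π ∈ JFinset τ := by
  classical
  simp only [JFinset, Finset.mem_filter, Finset.mem_range]
  refine ⟨by have := jval_le τ hn π; omega, ?_⟩
  by_cases h0 : jval τ hn π = 0
  · exact Or.inl h0
  · refine Or.inr ⟨by omega, jval_le τ hn π, ?_⟩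
    obtain ⟨p, hpat, hp, _⟩ := exists_pattern τ hn π hπ hf
    exact ⟨p, hpat, hp⟩

end JF

section RightInv
variable {k n : ℕ} (τ : Equiv.Perm (Fin k)) (hn : k ≤ n) {j : ℕ} (hjk : j ≤ k)
  (p : Equiv.Perm (Fin j)) (C : Finset (Fin n)) (hCcard : C.card = k - j)
  (hCK : C ⊆ Kset k n) (σ : Equiv.Perm (Fin (n + j - 2*k)))
  (hDcard : (Kset k n \ C).card = n + j - 2*k)
  (hp : p * p = 1) (hσ : σ * σ = 1)

lemma sigmaOf_buildPerm :
    sigmaOf k j (buildPerm τ hn hjk p C hCcard hCK σ hDcard hp hσ) = σ := by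
  set b := buildPerm τ hn hjk p C hCcard hCK σ hDcard hp hσ with hb
  have hC : Cset k b = C := buildPerm_Cset τ hn hjk p C hCcard hCK σ hDcard hp hσ
  have hD' : (Kset k n \ Cset k b).card = n + j - 2*k := by rw [hC]; exact hDcard
  have hst : ∀ x, x ∈ Kset k n \ Cset k b ↔ b x ∈ Kset k n \ Cset k b :=
    Dset_stable b (buildPerm_invol τ hn hjk p C hCcard hCK σ hDcard hp hσ)
  have hembeq : ((Kset k n \ C).orderEmbOfFin hDcard : Fin (n + j - 2*k) → Fin n)
      = ((Kset k n \ Cset k b).orderEmbOfFin hD') := by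
    apply Finset.orderEmbOfFin_unique
    · intro i; rw [hC]; exact Finset.orderEmbOfFin_mem _ _ i
    · exact ((Kset k n \ C).orderEmbOfFin hDcard).strictMono
  have key : ∀ i, sigmaOf k j b i = σ i := by
    intro i
    apply ((Kset k n \ Cset k b).orderEmbOfFin hD').injective
    rw [sigmaOf_spec b hD' hst i]
    rw [← congrFun hembeq i, ← congrFun hembeq (σ i)]
    exact buildPerm_D_apply τ hn hjk p C hCcard hCK σ hDcard hp hσ i
  ext i
  exact congrArg Fin.val (key i)

end RightInv


open scoped Classical

theorem count_involutions_containing {k n : ℕ} (τ : Equiv.Perm (Fin k)) (hn : k ≤ n) :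
    (Finset.univ.filter fun π : Equiv.Perm (Fin n) =>
        π * π = 1 ∧ ContainsSubseq π τ).card
      = ∑ j ∈ JFinset τ, Nat.choose (n - k) (k - j) * numInvolutions (n + j - 2 * k) := by
  classical
  rw [Finset.card_eq_sum_card_fiberwise (f := fun π => jval τ hn π)
    (t := JFinset τ) (fun π hπ => by
      simp only [Finset.mem_coe, Finset.mem_filter, Finset.mem_univ, true_and] at hπ
      exact jval_mem_JFinset τ hn π hπ.1 ((contains_iff τ hn π hπ.1).mp hπ.2))]
  apply Finset.sum_congr rfl
  intro j hj
  obtain ⟨hjk, p, hpat, hp⟩ := jfinset_spec τ hj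
  have htarget : Nat.choose (n-k) (k-j) * numInvolutions (n + j - 2*k)
      = (((Kset k n).powersetCard (k-j))
        ×ˢ (Finset.univ.filter fun σ : Equiv.Perm (Fin (n + j - 2*k)) => σ * σ = 1)).card := by
    rw [Finset.card_product, Finset.card_powersetCard, Kset_card hn]
    congr 1
  rw [htarget]
  have hC2 : ∀ q ∈ ((Kset k n).powersetCard (k-j))
      ×ˢ (Finset.univ.filter fun σ : Equiv.Perm (Fin (n + j - 2*k)) => σ * σ = 1),
      q.1 ⊆ Kset k n := by
    intro q hq
    exact (Finset.mem_powersetCard.mp (Finset.mem_product.mp hq).1).1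
  have hC1 : ∀ q ∈ ((Kset k n).powersetCard (k-j))
      ×ˢ (Finset.univ.filter fun σ : Equiv.Perm (Fin (n + j - 2*k)) => σ * σ = 1),
      q.1.card = k - j := by
    intro q hq
    exact (Finset.mem_powersetCard.mp (Finset.mem_product.mp hq).1).2
  have hC4 : ∀ q ∈ ((Kset k n).powersetCard (k-j))
      ×ˢ (Finset.univ.filter fun σ : Equiv.Perm (Fin (n + j - 2*k)) => σ * σ = 1),
      q.2 * q.2 = 1 := by
    intro q hq
    have := (Finset.mem_product.mp hq).2
    simpa using this
  have hC3 : ∀ q ∈ ((Kset k n).powersetCard (k-j))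
      ×ˢ (Finset.univ.filter fun σ : Equiv.Perm (Fin (n + j - 2*k)) => σ * σ = 1),
      (Kset k n \ q.1).card = n + j - 2*k := by
    intro q hq
    have hle : k - j ≤ n - k := by
      rw [← hC1 q hq, ← Kset_card (k := k) (n := n) hn]
      exact Finset.card_le_card (hC2 q hq)
    rw [Finset.card_sdiff_of_subset (hC2 q hq), Kset_card hn, hC1 q hq]
    omega
  have hF : ∀ π ∈ (Finset.univ.filter fun π : Equiv.Perm (Fin n) =>
      π * π = 1 ∧ ContainsSubseq π τ).filter (fun π => jval τ hn π = j),
      (π * π = 1) ∧ StrictMono (fun m => π (Fin.castLE hn (τ m))) ∧ jval τ hn π = j := by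
    intro π hπ
    simp only [Finset.mem_filter, Finset.mem_univ, true_and] at hπ
    exact ⟨hπ.1.1, (contains_iff τ hn π hπ.1.1).mp hπ.1.2, hπ.2⟩
  refine Finset.card_bij'
    (fun π _ => (Cset k π, sigmaOf k j π))
    (fun q hq => buildPerm τ hn hjk p q.1 (hC1 q hq) (hC2 q hq) q.2 (hC3 q hq)
      hp (hC4 q hq)) ?_ ?_ ?_ ?_
  · -- i maps into target
    intro π ha
    obtain ⟨hπ1, hf, hjval⟩ := hF π ha
    have hD : (Kset k n \ Cset k π).card = n + j - 2*k := by
      rw [Dset_card τ π hn hπ1 hf, hjval]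
    refine Finset.mem_product.mpr ⟨?_, ?_⟩
    · rw [Finset.mem_powersetCard]
      exact ⟨Cset_subset_Kset π, by rw [Cset_card τ hn π hπ1 hf, hjval]⟩
    · simp only [Finset.mem_filter, Finset.mem_univ, true_and]
      exact sigmaOf_invol π hπ1 hD (Dset_stable π hπ1)
  · -- j maps into fiber
    intro q hq
    simp only [Finset.mem_filter, Finset.mem_univ, true_and]
    refine ⟨⟨buildPerm_invol τ hn hjk p q.1 (hC1 q hq) (hC2 q hq) q.2 (hC3 q hq) hp (hC4 q hq), ?_⟩, ?_⟩
    · exact (contains_iff τ hn _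
        (buildPerm_invol τ hn hjk p q.1 (hC1 q hq) (hC2 q hq) q.2 (hC3 q hq) hp (hC4 q hq))).mpr
        (buildPerm_strictMono τ hn hjk p q.1 (hC1 q hq) (hC2 q hq) q.2 (hC3 q hq) hp (hC4 q hq) hpat)
    · exact buildPerm_jval τ hn hjk p q.1 (hC1 q hq) (hC2 q hq) q.2 (hC3 q hq) hp (hC4 q hq)
  · -- left inverse
    intro π ha
    obtain ⟨hπ1, hf, hjval⟩ := hF π ha
    subst hjval
    exact build_eq_self τ hn π hπ1 hf p hpat hp
      (sigmaOf_invol π hπ1 (Dset_card τ π hn hπ1 hf) (Dset_stable π hπ1))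
      (Dset_card τ π hn hπ1 hf)
  · -- right inverse
    intro q hq
    have h1 := buildPerm_Cset τ hn hjk p q.1 (hC1 q hq) (hC2 q hq) q.2 (hC3 q hq) hp (hC4 q hq)
    have h2 := sigmaOf_buildPerm τ hn hjk p q.1 (hC1 q hq) (hC2 q hq) q.2 (hC3 q hq) hp (hC4 q hq)
    exact Prod.ext h1 h2
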